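/- Every parallel set of edges in a 2-terminal directed graph is concurrent: if S is contained in a minimal s-t cut, then for each edge e in S there is a simple s-t path meeting S exactly in e. -/

import Mathlib

variable {V : Type*}

/-- `p` is a simple directed path in the edge relation `E`. -/
def IsDiPath (E : V → V → Prop) (p : List V) : Prop := p.Chain' E ∧ p.Nodup

/-- `p` is a simple directed path from `x` to `y`. -/
def PathFrom (E : V → V → Prop) (p : List V) (x y : V) : Prop :=
  IsDiPath E p ∧ p.head? = some x ∧ p.getLast? = some y

/-- the edge `(a,b)` is traversed by the path `p`. -/
def EdgeOn (a b : V) (p : List V) : Prop := (a, b) ∈ p.zip p.tail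

/-- directed reachability. -/
def Reach (E : V → V → Prop) : V → V → Prop := Relation.ReflTransGen E

/-- no directed cycles. -/
def Acyclic (E : V → V → Prop) : Prop := ∀ a b, E a b → ¬ Reach E b a

/-- 2-terminal graph (edge version): no self-loops, some `s`-`t` path exists and
every edge lies on a simple `s`-`t` path. -/
def TwoTerminalE (E : V → V → Prop) (s t : V) : Prop :=
  (∀ v, ¬ E v v) ∧ (∃ p, PathFrom E p s t) ∧
  ∀ a b, E a b → ∃ p, PathFrom E p s t ∧ EdgeOn a b p

/-- 2-terminal graph (full version): no self-loops and every vertex and edge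
lies on a simple `s`-`t` path. -/
def TwoTerminalF (E : V → V → Prop) (s t : V) : Prop :=
  (∀ v, ¬ E v v) ∧ (∀ v, ∃ p, PathFrom E p s t ∧ v ∈ p) ∧
  ∀ a b, E a b → ∃ p, PathFrom E p s t ∧ EdgeOn a b p

/-- `C` is an `s`-`t` edge cut. -/
def IsCut (E : V → V → Prop) (s t : V) (C : Set (V × V)) : Prop :=
  (∀ e ∈ C, E e.1 e.2) ∧ ¬ ∃ p, PathFrom (fun a b => E a b ∧ (a, b) ∉ C) p s t

def IsMinCut (E : V → V → Prop) (s t : V) (C : Set (V × V)) : Prop :=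
  IsCut E s t C ∧ ∀ C' ⊂ C, ¬ IsCut E s t C'

/-- `S` is parallel: contained in some minimal `s`-`t` cut. -/
def Parallel (E : V → V → Prop) (s t : V) (S : Set (V × V)) : Prop :=
  ∃ C, IsMinCut E s t C ∧ S ⊆ C

/-- `S` is serial: contained in a simple directed `s`-`t` path. -/
def Serial (E : V → V → Prop) (s t : V) (S : Set (V × V)) : Prop :=
  ∃ p, PathFrom E p s t ∧ ∀ e ∈ S, EdgeOn e.1 e.2 p

lemma chain'_iff_edgeOn {E : V → V → Prop} :
    ∀ (p : List V), p.Chain' E ↔ ∀ a b, EdgeOn a b p → E a b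
  | [] => by simp [EdgeOn, List.Chain']
  | [a] => by simp [EdgeOn, List.Chain']
  | a :: b :: l => by
    rw [show List.Chain' E (a :: b :: l) ↔ E a b ∧ List.Chain' E (b :: l) from List.isChain_cons_cons, chain'_iff_edgeOn (b :: l)]
    constructor
    · rintro ⟨hab, hrest⟩ x y hxy
      rcases (List.mem_cons).1 hxy with h | h
      · cases h; exact hab
      · exact hrest x y h
    · intro h
      exact ⟨h a b List.mem_cons_self, fun x y hxy => h x y (List.mem_cons_of_mem _ hxy)⟩

/-- Every parallel set is concurrent: for each `e ∈ S` there is a simple `s`-`t`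
path meeting `S` exactly in `e`. -/
theorem stmt10 {V : Type*} (E : V → V → Prop) (s t : V)
    (hG : TwoTerminalE E s t) (S : Set (V × V)) (hS : Parallel E s t S) :
    ∀ e ∈ S, ∃ p, PathFrom E p s t ∧ EdgeOn e.1 e.2 p ∧
      ∀ f ∈ S, EdgeOn f.1 f.2 p → f = e := by
  obtain ⟨C, ⟨⟨hCE, hCcut⟩, hmin⟩, hSC⟩ := hS
  intro e he
  have heC : e ∈ C := hSC he
  have hssub : C \ {e} ⊂ C := by
    constructor
    · intro x hx; exact hx.1
    · intro h; exact (h heC).2 rfl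
  have hnc := hmin _ hssub
  unfold IsCut at hnc
  push_neg at hnc
  obtain ⟨p, hp⟩ := hnc fun f hf => hCE f hf.1
  obtain ⟨⟨hchain, hnodup⟩, hhead, hlast⟩ := hp
  have hedges : ∀ a b, EdgeOn a b p → E a b ∧ (a, b) ∉ C \ {e} :=
    (chain'_iff_edgeOn p).1 hchain
  have hpE : PathFrom E p s t :=
    ⟨⟨List.IsChain.imp (fun _ _ h => h.1) hchain, hnodup⟩, hhead, hlast⟩
  have heOn : EdgeOn e.1 e.2 p := by
    by_contra hnot
    apply hCcut
    refine ⟨p, ⟨⟨(chain'_iff_edgeOn p).2 ?_, hnodup⟩, hhead, hlast⟩⟩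
    intro a b hab
    obtain ⟨hEab, hnab⟩ := hedges a b hab
    refine ⟨hEab, fun habC => ?_⟩
    apply hnab
    refine ⟨habC, ?_⟩
    intro habe
    apply hnot
    rw [← habe]
    exact hab
  refine ⟨p, hpE, heOn, ?_⟩
  intro f hf hfon
  have := (hedges f.1 f.2 hfon).2
  by_contra hne
  exact this ⟨hSC hf, hne⟩
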